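/- In the type-B₂ normal form above, there is no unit vector ξ̄ = cos θ ξ + sin θ ξ̃ in W such that the restriction of A_ξ̄ to span{X₀, e} ⊕ ({e}^⊥ ∩ V) acts as a multiple of the identity on the subspace span{X₀} ⊕ V; that is, the conditions ⟨A_ξ̄X₀, e⟩ = 0 and ⟨A_ξ̄X₀,X₀⟩ = ⟨A_ξ̄e,e⟩ = ⟨A_ξ̄S,S⟩ for a unit S ∈ {e}^⊥ ∩ V are incompatible with λ ≠ 0 and βγ − λ² ≠ 0. -/

import Mathlib

open scoped RealInnerProductSpace

/-- In the type-B₂ normal form there is no unit normal direction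
`ξ̄ = cos θ ξ + sin θ ξ̃` whose shape operator restricts as a multiple of the
identity on `span{X₀} ⊕ V`: the conditions `⟨A_ξ̄X₀,e⟩ = 0` and
`⟨A_ξ̄X₀,X₀⟩ = ⟨A_ξ̄e,e⟩ = ⟨A_ξ̄S,S⟩` for a unit `S ∈ {e}ᗮ ∩ V` are
incompatible with `λ ≠ 0` and `βγ − λ² ≠ 0` (proof of Proposition 3.10). -/
theorem stmt_15 {E : Type*} [NormedAddCommGroup E] [InnerProductSpace ℝ E]
    (H V : Submodule ℝ E)
    (horth : ∀ x ∈ H, ∀ v ∈ V, ⟪x, v⟫ = 0)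
    (X₀ : E) (hX₀ : X₀ ∈ H) (hX₀n : ‖X₀‖ = 1)
    (e : E) (he : e ∈ V) (hen : ‖e‖ = 1)
    (β lam γ βt₀ γt₀ bt δt₀ : ℝ)
    (hlam : lam ≠ 0) (hB2 : β * γ - lam ^ 2 ≠ 0) (hβt₀ : βt₀ ≠ 0)
    (hδt₀ : δt₀ = βt₀ * γt₀ + β * γ - lam ^ 2)
    (hbt : bt = βt₀⁻¹ * δt₀)
    (A A' : E →ₗ[ℝ] E)
    (hAH : ∀ Y ∈ H, A Y = ⟪Y, X₀⟫ • (β • X₀ + lam • e))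
    (hAV : ∀ v ∈ V, A v = ⟪v, e⟫ • (lam • X₀ + γ • e))
    (hA'H : ∀ Y ∈ H, A' Y = (βt₀ * ⟪Y, X₀⟫) • X₀)
    (hA'V : ∀ v ∈ V, A' v = bt • v + ((γt₀ - bt) * ⟪v, e⟫) • e) :
    ∀ cθ sθ : ℝ, cθ ^ 2 + sθ ^ 2 = 1 →
      ∀ S ∈ V, ‖S‖ = 1 → ⟪S, e⟫ = 0 →
        ¬(cθ * ⟪A X₀, e⟫ + sθ * ⟪A' X₀, e⟫ = 0 ∧
          cθ * ⟪A X₀, X₀⟫ + sθ * ⟪A' X₀, X₀⟫ =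
            cθ * ⟪A e, e⟫ + sθ * ⟪A' e, e⟫ ∧
          cθ * ⟪A e, e⟫ + sθ * ⟪A' e, e⟫ =
            cθ * ⟪A S, S⟫ + sθ * ⟪A' S, S⟫) := by
  intro cθ sθ hcs S hS hSn hSe
  rintro ⟨h1, h2, h3⟩
  have hXX : ⟪X₀, X₀⟫ = (1:ℝ) := by
    rw [real_inner_self_eq_norm_sq, hX₀n]; norm_num
  have hee : ⟪e, e⟫ = (1:ℝ) := by
    rw [real_inner_self_eq_norm_sq, hen]; norm_num
  have hSS : ⟪S, S⟫ = (1:ℝ) := by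
    rw [real_inner_self_eq_norm_sq, hSn]; norm_num
  have hXe : ⟪X₀, e⟫ = 0 := horth X₀ hX₀ e he
  have heX : ⟪e, X₀⟫ = 0 := real_inner_comm X₀ e ▸ hXe
  have hSX : ⟪S, X₀⟫ = 0 := real_inner_comm X₀ S ▸ horth X₀ hX₀ S hS
  have hAX : A X₀ = β • X₀ + lam • e := by
    rw [hAH X₀ hX₀, hXX, one_smul]
  have hA'X : A' X₀ = βt₀ • X₀ := by
    rw [hA'H X₀ hX₀, hXX, mul_one]
  have hAe : A e = lam • X₀ + γ • e := by
    rw [hAV e he, hee, one_smul]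
  have hA'e : A' e = bt • e + (γt₀ - bt) • e := by
    rw [hA'V e he, hee, mul_one]
  have hAS : A S = 0 := by
    rw [hAV S hS, hSe]; simp
  have hA'S : A' S = bt • S + ((γt₀ - bt) * 0) • e := by
    rw [hA'V S hS, hSe]
  have iAXe : ⟪A X₀, e⟫ = lam := by
    rw [hAX]; simp [inner_add_left, real_inner_smul_left, hXe, hee, hen]
  have iA'Xe : ⟪A' X₀, e⟫ = 0 := by
    rw [hA'X]; simp [real_inner_smul_left, hXe]
  have iAXX : ⟪A X₀, X₀⟫ = β := by
    rw [hAX]; simp [inner_add_left, real_inner_smul_left, hXX, heX, hX₀n]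
  have iA'XX : ⟪A' X₀, X₀⟫ = βt₀ := by
    rw [hA'X]; simp [real_inner_smul_left, hXX, hX₀n]
  have iAee : ⟪A e, e⟫ = γ := by
    rw [hAe]; simp [inner_add_left, real_inner_smul_left, hXe, hee, hen]
  have iA'ee : ⟪A' e, e⟫ = γt₀ := by
    rw [hA'e]; simp [inner_add_left, real_inner_smul_left, hee, hen]
  have iASS : ⟪A S, S⟫ = 0 := by rw [hAS]; simp
  have iA'SS : ⟪A' S, S⟫ = bt := by
    rw [hA'S]; simp [inner_add_left, real_inner_smul_left, hSS, hSn,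
      real_inner_comm e S ▸ hSe]
  rw [iAXe, iA'Xe] at h1
  rw [iAee, iA'ee, iASS, iA'SS] at h3
  have hcθ : cθ = 0 := by
    rcases mul_eq_zero.1 (by linarith : cθ * lam = 0) with h | h
    · exact h
    · exact absurd h hlam
  have hsθ : sθ ≠ 0 := by
    intro h; rw [hcθ, h] at hcs; norm_num at hcs
  rw [hcθ] at h3
  have hbtγ : bt = γt₀ := by
    simp at h3
    rcases h3 with h | h
    · exact h.symm
    · exact absurd h hsθ
  rw [hbt, hδt₀] at hbtγ
  field_simp at hbtγ
  apply hB2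
  linarith
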